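/- arXiv:1310.7826 — 3 statements merged into one kernel-verified Lean document; each statement's English description precedes it below -/
import Mathlib

section
/- For any invertible real n×n matrix F and any orthogonal matrix Q, ‖F − Q‖_F ≥ ‖√(FᵀF) − I‖_F, where ‖·‖_F is the Frobenius norm, with equality if and only if Q is the orthogonal polar factor of F. -/
open Matrix

noncomputable def frob {n : ℕ} (A : Matrix (Fin n) (Fin n) ℝ) : ℝ :=
  Real.sqrt ((Aᵀ * A).trace)

lemma trace_tmul_self_eq_sum {n : ℕ} (B : Matrix (Fin n) (Fin n) ℝ) :
    (Bᵀ * B).trace = ∑ j, ∑ k, (B k j)^2 := by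
  simp [Matrix.trace, Matrix.mul_apply, Matrix.diag, sq]

lemma trace_tmul_self_nonneg {n : ℕ} (B : Matrix (Fin n) (Fin n) ℝ) :
    0 ≤ (Bᵀ * B).trace := by
  rw [trace_tmul_self_eq_sum]
  positivity

lemma trace_tmul_self_eq_zero_iff {n : ℕ} (B : Matrix (Fin n) (Fin n) ℝ) :
    (Bᵀ * B).trace = 0 ↔ B = 0 := by
  rw [trace_tmul_self_eq_sum]
  constructor
  · intro h
    ext k j
    have h1 : ∀ j ∈ Finset.univ, (0:ℝ) ≤ ∑ k, (B k j)^2 := by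
      intro j _; positivity
    have h2 := (Finset.sum_eq_zero_iff_of_nonneg h1).mp h j (Finset.mem_univ j)
    have h3 : ∀ k ∈ Finset.univ, (0:ℝ) ≤ (B k j)^2 := by intro k _; positivity
    have := (Finset.sum_eq_zero_iff_of_nonneg h3).mp h2 k (Finset.mem_univ k)
    have := pow_eq_zero_iff (n := 2) (by norm_num) |>.mp this
    simpa using this
  · rintro rfl; simp

lemma key_trace_le {n : ℕ} (Z U : Matrix (Fin n) (Fin n) ℝ)
    (hZ : Zᵀ * Z = 1) (hU : U.PosDef) :
    (Z * U).trace ≤ U.trace ∧ ((Z * U).trace = U.trace ↔ Z = 1) := by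
  have hUsymm : Uᵀ = U := by
    have := hU.1
    simpa [Matrix.IsHermitian, Matrix.conjTranspose_eq_transpose_of_trivial] using this
  obtain ⟨V, hVV, hVsymm⟩ : ∃ V : Matrix (Fin n) (Fin n) ℝ, V * V = U ∧ Vᵀ = V := by
    open scoped MatrixOrder in
    refine ⟨CFC.sqrt U, CFC.sqrt_mul_sqrt_self U hU.posSemidef.nonneg, ?_⟩
    have := (CFC.sqrt_nonneg U).posSemidef.1
    simpa [Matrix.IsHermitian, Matrix.conjTranspose_eq_transpose_of_trivial] using this
  have hVdet : IsUnit V.det := by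
    have : V.det * V.det = U.det := by rw [← Matrix.det_mul, hVV]
    have hUdet := hU.det_pos
    have : V.det ≠ 0 := by
      intro h; rw [h, mul_zero] at this; exact hUdet.ne this
    exact this.isUnit
  set A := (1 : Matrix (Fin n) (Fin n) ℝ) - Z with hA
  have hZtU : (Zᵀ * U).trace = (Z * U).trace := by
    rw [← Matrix.trace_transpose (Zᵀ * U), Matrix.transpose_mul, hUsymm,
      Matrix.transpose_transpose, Matrix.trace_mul_comm]
  have hkey : (Aᵀ * A * U).trace = 2 * (U.trace - (Z * U).trace) := by
    have : Aᵀ * A = 2 • (1 : Matrix (Fin n) (Fin n) ℝ) - Z - Zᵀ := by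
      rw [hA, Matrix.transpose_sub, Matrix.transpose_one, Matrix.sub_mul,
        Matrix.mul_sub, Matrix.mul_sub, hZ]
      noncomm_ring
    rw [this, Matrix.sub_mul, Matrix.sub_mul, Matrix.trace_sub, Matrix.trace_sub,
      Matrix.smul_mul, Matrix.trace_smul, Matrix.one_mul, hZtU]
    ring
  have hconj : (Aᵀ * A * U).trace = ((A * V)ᵀ * (A * V)).trace := by
    rw [← hVV, Matrix.transpose_mul, hVsymm]
    rw [show Aᵀ * A * (V * V) = (Aᵀ * A * V) * V by noncomm_ring,
      Matrix.trace_mul_comm]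
    noncomm_ring
  have hnn : 0 ≤ (Aᵀ * A * U).trace := hconj ▸ trace_tmul_self_nonneg (A * V)
  constructor
  · nlinarith [hkey]
  · constructor
    · intro h
      have h0 : (Aᵀ * A * U).trace = 0 := by rw [hkey, h]; ring
      have hAV : A * V = 0 := by
        rw [hconj] at h0
        exact (trace_tmul_self_eq_zero_iff (A * V)).mp h0
      have hA0 : A = 0 := by
        have := congrArg (fun M => M * V⁻¹) hAV
        simpa [Matrix.mul_assoc, Matrix.mul_nonsing_inv V hVdet] using this
      have : (1 : Matrix (Fin n) (Fin n) ℝ) - Z = 0 := hA0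
      linear_combination (norm := (ext i j; simp)) -this
    · rintro rfl
      simp

theorem polar_factor_best_approx (n : ℕ)
    (F Q U : Matrix (Fin n) (Fin n) ℝ) (hF : IsUnit F.det)
    (hQ : Qᵀ * Q = 1) (hU : U.PosDef) (hU2 : U * U = Fᵀ * F) :
    frob (F - Q) ≥ frob (U - 1) ∧
      (frob (F - Q) = frob (U - 1) ↔ Q = F * U⁻¹) := by
  have hUsymm : Uᵀ = U := by
    have := hU.1
    simpa [Matrix.IsHermitian, Matrix.conjTranspose_eq_transpose_of_trivial] using this
  have hUdet : IsUnit U.det := hU.det_pos.ne'.isUnit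
  have hUinv : U * U⁻¹ = 1 := Matrix.mul_nonsing_inv U hUdet
  have hUinv' : U⁻¹ * U = 1 := Matrix.nonsing_inv_mul U hUdet
  have hUinvT : U⁻¹ᵀ = U⁻¹ := by
    rw [Matrix.transpose_nonsing_inv, hUsymm]
  set R := F * U⁻¹ with hRdef
  have hFRU : F = R * U := by
    rw [hRdef, Matrix.mul_assoc, hUinv', Matrix.mul_one]
  have hR : Rᵀ * R = 1 := by
    rw [hRdef, Matrix.transpose_mul, hUinvT]
    calc U⁻¹ * Fᵀ * (F * U⁻¹) = U⁻¹ * (Fᵀ * F) * U⁻¹ := by noncomm_ring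
      _ = U⁻¹ * (U * U) * U⁻¹ := by rw [hU2]
      _ = (U⁻¹ * U) * (U * U⁻¹) := by noncomm_ring
      _ = 1 := by rw [hUinv', hUinv, Matrix.one_mul]
  have hQQt : Q * Qᵀ = 1 := mul_eq_one_comm.mp hQ
  set Z := Qᵀ * R with hZdef
  have hZ : Zᵀ * Z = 1 := by
    rw [hZdef, Matrix.transpose_mul, Matrix.transpose_transpose]
    calc Rᵀ * Q * (Qᵀ * R) = Rᵀ * (Q * Qᵀ) * R := by noncomm_ring
      _ = Rᵀ * R := by rw [hQQt, Matrix.mul_one]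
      _ = 1 := hR
  obtain ⟨hle, heq⟩ := key_trace_le Z U hZ hU
  have hQF : (Qᵀ * F).trace = (Z * U).trace := by
    rw [hZdef, hFRU, ← Matrix.mul_assoc]
  have hFtQ : (Fᵀ * Q).trace = (Qᵀ * F).trace := by
    rw [← Matrix.trace_transpose (Fᵀ * Q), Matrix.transpose_mul,
      Matrix.transpose_transpose]
  have t1 : ((F - Q)ᵀ * (F - Q)).trace
      = (Fᵀ * F).trace - 2 * (Z * U).trace + n := by
    have : (F - Q)ᵀ * (F - Q) = Fᵀ * F - Fᵀ * Q - Qᵀ * F + Qᵀ * Q := by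
      rw [Matrix.transpose_sub]; noncomm_ring
    rw [this, Matrix.trace_add, Matrix.trace_sub, Matrix.trace_sub, hQ,
      Matrix.trace_one, hFtQ, hQF]
    simp [Fintype.card_fin]
    ring
  have t2 : ((U - 1)ᵀ * (U - 1)).trace
      = (Fᵀ * F).trace - 2 * U.trace + n := by
    have : (U - 1)ᵀ * (U - 1) = U * U - U - U + 1 := by
      rw [Matrix.transpose_sub, Matrix.transpose_one, hUsymm]; noncomm_ring
    rw [this, Matrix.trace_add, Matrix.trace_sub, Matrix.trace_sub, hU2,
      Matrix.trace_one]
    simp [Fintype.card_fin]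
    ring
  have hn1 : 0 ≤ ((F - Q)ᵀ * (F - Q)).trace := trace_tmul_self_nonneg _
  have hn2 : 0 ≤ ((U - 1)ᵀ * (U - 1)).trace := trace_tmul_self_nonneg _
  have htle : ((U - 1)ᵀ * (U - 1)).trace ≤ ((F - Q)ᵀ * (F - Q)).trace := by
    rw [t1, t2]; linarith
  constructor
  · exact Real.sqrt_le_sqrt htle
  · rw [frob, frob, Real.sqrt_inj hn1 hn2, t1, t2]
    constructor
    · intro h
      have hZU : (Z * U).trace = U.trace := by linarith
      have hZ1 : Z = 1 := heq.mp hZU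
      have : Q * Z = Q := by rw [hZ1, Matrix.mul_one]
      rw [hZdef, ← Matrix.mul_assoc, hQQt, Matrix.one_mul] at this
      exact this.symm
    · intro h
      have hZ1 : Z = 1 := by rw [hZdef, h]; exact hR
      rw [heq.mpr hZ1]
end

section
/- For any invertible real n×n matrix F, the infimum over orthogonal Q of ‖QᵀF − I‖_F equals ‖√(FᵀF) − I‖_F. -/
open Matrix

/-- Cauchy–Schwarz: for orthogonal `P`, `⟨y, P y⟩ ≤ ⟨y, y⟩`. -/
lemma dot_le_of_orth {n : ℕ} (P : Matrix (Fin n) (Fin n) ℝ)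
    (hP : Pᵀ * P = 1) (y : Fin n → ℝ) :
    y ⬝ᵥ (P *ᵥ y) ≤ y ⬝ᵥ y := by
  set z := P *ᵥ y with hz
  have hzz : z ⬝ᵥ z = y ⬝ᵥ y := by
    calc z ⬝ᵥ (P *ᵥ y) = (z ᵥ* P) ⬝ᵥ y := dotProduct_mulVec z P y
    _ = (Pᵀ *ᵥ z) ⬝ᵥ y := by rw [← mulVec_transpose]
    _ = ((Pᵀ * P) *ᵥ y) ⬝ᵥ y := by rw [hz, mulVec_mulVec]
    _ = y ⬝ᵥ y := by rw [hP, one_mulVec]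
  have hyy : (0:ℝ) ≤ y ⬝ᵥ y := Finset.sum_nonneg fun i _ => mul_self_nonneg (y i)
  have hcs : (y ⬝ᵥ z) ^ 2 ≤ (y ⬝ᵥ y) * (z ⬝ᵥ z) := by
    have := Finset.sum_mul_sq_le_sq_mul_sq Finset.univ y z
    simpa [dotProduct, pow_two] using this
  have hcs' : (y ⬝ᵥ z) ^ 2 ≤ (y ⬝ᵥ y) ^ 2 := by
    rw [hzz, ← pow_two] at hcs; exact hcs
  calc y ⬝ᵥ z ≤ |y ⬝ᵥ z| := le_abs_self _
    _ = Real.sqrt ((y ⬝ᵥ z) ^ 2) := (Real.sqrt_sq_eq_abs _).symm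
    _ ≤ Real.sqrt ((y ⬝ᵥ y) ^ 2) := Real.sqrt_le_sqrt hcs'
    _ = y ⬝ᵥ y := Real.sqrt_sq hyy

lemma trace_VPV_le {n : ℕ} (P V : Matrix (Fin n) (Fin n) ℝ)
    (hP : Pᵀ * P = 1) (hV : Vᵀ = V) :
    (V * P * V).trace ≤ (V * V).trace := by
  have hsym : ∀ i j, V i j = V j i := fun i j => by
    conv_lhs => rw [← hV]
    exact transpose_apply V i j
  rw [Matrix.trace, Matrix.trace]
  apply Finset.sum_le_sum
  intro i _
  set y : Fin n → ℝ := fun k => V k i with hy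
  have h1 : (V * P * V).diag i = y ⬝ᵥ (P *ᵥ y) := by
    rw [Matrix.diag_apply, Matrix.mul_assoc, Matrix.mul_apply, dotProduct]
    apply Finset.sum_congr rfl
    intro j _
    rw [Matrix.mul_apply, mulVec, dotProduct, hy, hsym i j]
  have h2 : (V * V).diag i = y ⬝ᵥ y := by
    rw [Matrix.diag_apply, Matrix.mul_apply, dotProduct]
    apply Finset.sum_congr rfl
    intro j _
    rw [hy, hsym i j]
  rw [h1, h2]
  exact dot_le_of_orth P hP y

lemma trace_PU_le {n : ℕ} (P U : Matrix (Fin n) (Fin n) ℝ)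
    (hP : Pᵀ * P = 1) (hU : U.PosDef) :
    (P * U).trace ≤ U.trace := by
  have hps := hU.posSemidef
  open MatrixOrder in set V := CFC.sqrt U with hVdef
  have hVV : V * V = U := by open MatrixOrder in exact CFC.sqrt_mul_sqrt_self U hps.nonneg
  have hVsym : Vᵀ = V := by
    have := (show V.PosSemidef by open MatrixOrder in exact (CFC.sqrt_nonneg U).posSemidef).isHermitian
    rwa [Matrix.IsHermitian, conjTranspose_eq_transpose_of_trivial] at this
  calc (P * U).trace = (P * V * V).trace := by rw [Matrix.mul_assoc, hVV]
    _ = (V * P * V).trace := by rw [trace_mul_cycle]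
    _ ≤ (V * V).trace := trace_VPV_le P V hP hVsym
    _ = U.trace := by rw [hVV]

lemma trace_transpose_mul_self_nonneg {n : ℕ} (A : Matrix (Fin n) (Fin n) ℝ) :
    0 ≤ (Aᵀ * A).trace := by
  rw [Matrix.trace]
  refine Finset.sum_nonneg fun i _ => ?_
  rw [Matrix.diag_apply, Matrix.mul_apply]
  exact Finset.sum_nonneg fun j _ => by
    rw [transpose_apply]; exact mul_self_nonneg _

theorem inf_dist_to_orthogonal (n : ℕ)
    (F U : Matrix (Fin n) (Fin n) ℝ) (hF : IsUnit F.det)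
    (hU : U.PosDef) (hU2 : U * U = Fᵀ * F) :
    sInf {x : ℝ | ∃ Q : Matrix (Fin n) (Fin n) ℝ,
        Qᵀ * Q = 1 ∧ x = frob (Qᵀ * F - 1)} = frob (U - 1) := by
  have hUsym : Uᵀ = U := by
    have := hU.isHermitian
    rwa [Matrix.IsHermitian, conjTranspose_eq_transpose_of_trivial] at this
  have hUunit : IsUnit U.det := isUnit_iff_ne_zero.mpr (ne_of_gt hU.det_pos)
  -- polar decomposition: R = F U⁻¹ is orthogonal and F = R U
  set R := F * U⁻¹ with hRdef
  have hUinvT : U⁻¹ᵀ = U⁻¹ := by rw [transpose_nonsing_inv, hUsym]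
  have hRorth : Rᵀ * R = 1 := by
    rw [hRdef, transpose_mul, hUinvT]
    calc U⁻¹ * Fᵀ * (F * U⁻¹) = U⁻¹ * (Fᵀ * F) * U⁻¹ := by
          rw [Matrix.mul_assoc, Matrix.mul_assoc, Matrix.mul_assoc]
      _ = U⁻¹ * (U * U) * U⁻¹ := by rw [hU2]
      _ = (U⁻¹ * U) * (U * U⁻¹) := by
          rw [Matrix.mul_assoc, Matrix.mul_assoc, Matrix.mul_assoc]
      _ = 1 := by rw [Matrix.nonsing_inv_mul U hUunit, Matrix.mul_nonsing_inv U hUunit,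
          Matrix.one_mul]
  have hRF : R * U = F := by
    rw [hRdef, Matrix.mul_assoc, Matrix.nonsing_inv_mul U hUunit, Matrix.mul_one]
  have hRtF : Rᵀ * F = U := by
    calc Rᵀ * F = (Rᵀ * R) * U := by rw [Matrix.mul_assoc, hRF]
      _ = U := by rw [hRorth, Matrix.one_mul]
  -- the key trace inequality for each orthogonal Q
  have key : ∀ Q : Matrix (Fin n) (Fin n) ℝ, Qᵀ * Q = 1 →
      (Qᵀ * F).trace ≤ U.trace := by
    intro Q hQ
    have hQQt : Q * Qᵀ = 1 := mul_eq_one_comm.mp hQ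
    set P := Qᵀ * R with hPdef
    have hPorth : Pᵀ * P = 1 := by
      rw [hPdef, transpose_mul, transpose_transpose]
      calc Rᵀ * Q * (Qᵀ * R) = Rᵀ * (Q * Qᵀ) * R := by
            rw [Matrix.mul_assoc, Matrix.mul_assoc, Matrix.mul_assoc]
        _ = Rᵀ * R := by rw [hQQt, Matrix.mul_one]
        _ = 1 := hRorth
    have : Qᵀ * F = P * U := by rw [hPdef, Matrix.mul_assoc, hRF]
    rw [this]
    exact trace_PU_le P U hPorth hU
  -- expansion of the squared Frobenius norm
  have expand : ∀ Q : Matrix (Fin n) (Fin n) ℝ, Qᵀ * Q = 1 →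
      ((Qᵀ * F - 1)ᵀ * (Qᵀ * F - 1)).trace
        = (U * U).trace - 2 * (Qᵀ * F).trace + (n : ℝ) := by
    intro Q hQ
    have hQQt : Q * Qᵀ = 1 := mul_eq_one_comm.mp hQ
    have h1 : (Qᵀ * F - 1)ᵀ * (Qᵀ * F - 1)
        = Fᵀ * (Q * Qᵀ) * F - (Qᵀ * F)ᵀ - Qᵀ * F + 1 := by
      rw [transpose_sub, transpose_mul, transpose_transpose, transpose_one]
      noncomm_ring
    rw [h1, hQQt, Matrix.mul_one, ← hU2]
    rw [trace_add, trace_sub, trace_sub, trace_transpose, trace_one]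
    simp [Fintype.card_fin]
    ring
  have expandU : ((U - 1)ᵀ * (U - 1)).trace
      = (U * U).trace - 2 * U.trace + (n : ℝ) := by
    have h1 : (U - 1)ᵀ * (U - 1) = U * U - Uᵀ - U + 1 := by
      rw [transpose_sub, transpose_one, hUsym]
      noncomm_ring
    rw [h1, trace_add, trace_sub, trace_sub, trace_transpose, trace_one]
    simp [Fintype.card_fin]
    ring
  -- lower bound
  have lb : ∀ x ∈ {x : ℝ | ∃ Q : Matrix (Fin n) (Fin n) ℝ,
      Qᵀ * Q = 1 ∧ x = frob (Qᵀ * F - 1)}, frob (U - 1) ≤ x := by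
    rintro x ⟨Q, hQ, rfl⟩
    unfold frob
    apply Real.sqrt_le_sqrt
    rw [expand Q hQ, expandU]
    have := key Q hQ
    linarith
  -- membership
  have mem : frob (U - 1) ∈ {x : ℝ | ∃ Q : Matrix (Fin n) (Fin n) ℝ,
      Qᵀ * Q = 1 ∧ x = frob (Qᵀ * F - 1)} := ⟨R, hRorth, by rw [hRtF]⟩
  exact le_antisymm (csInf_le ⟨frob (U - 1), lb⟩ mem)
    (le_csInf ⟨frob (U - 1), mem⟩ lb)
end

section
/- For any real 3×3 matrix A (the displacement gradient), any point p ∈ ℝ³, any translation t ∈ ℝ³ and any skew-symmetric W, the integral over B_ρ(0) of |p + A·h − (W·h + t)|² dh is minimized exactly when t = p and W = skw A, with minimal value (4πρ⁵/15)·‖sym A‖_F². -/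
open Matrix MeasureTheory

noncomputable def mv (Z : Matrix (Fin 3) (Fin 3) ℝ) (h : EuclideanSpace ℝ (Fin 3)) :
    EuclideanSpace ℝ (Fin 3) :=
  (EuclideanSpace.equiv (Fin 3) ℝ).symm (Z.mulVec (EuclideanSpace.equiv (Fin 3) ℝ h))

open Metric

local notation "E3" => EuclideanSpace ℝ (Fin 3)

lemma integrableOn_ball_of_continuous {f : E3 → ℝ} (hf : Continuous f) (ρ : ℝ) :
    IntegrableOn f (ball (0 : E3) ρ) :=
  ((hf.continuousOn).integrableOn_compact (isCompact_closedBall 0 ρ)).mono_set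
    ball_subset_closedBall

lemma setIntegral_comp_isometry (e : E3 ≃ₗᵢ[ℝ] E3) (f : E3 → ℝ) (ρ : ℝ) :
    ∫ h in ball (0 : E3) ρ, f (e h) = ∫ h in ball (0 : E3) ρ, f h := by
  have hpre : e ⁻¹' (ball (0 : E3) ρ) = ball 0 ρ := by
    ext h
    simp [mem_ball_zero_iff, e.norm_map]
  have hmp : MeasurePreserving e (volume : Measure E3) (volume : Measure E3) :=
    e.measurePreserving
  nth_rewrite 1 [← hpre]
  exact hmp.setIntegral_preimage_emb (e.toHomeomorph.measurableEmbedding) f (ball 0 ρ)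

lemma setIntegral_zero_of_odd (e : E3 ≃ₗᵢ[ℝ] E3) (f : E3 → ℝ) (ρ : ℝ)
    (hodd : ∀ h, f (e h) = - f h) :
    ∫ h in ball (0 : E3) ρ, f h = 0 := by
  have h1 := setIntegral_comp_isometry e f ρ
  simp only [hodd, integral_neg] at h1
  linarith

noncomputable def negCoord (j : Fin 3) : E3 ≃ₗᵢ[ℝ] E3 :=
  LinearIsometryEquiv.piLpCongrRight 2
    (fun i => if i = j then LinearIsometryEquiv.neg ℝ else LinearIsometryEquiv.refl ℝ ℝ)

lemma negCoord_apply (j : Fin 3) (h : E3) (i : Fin 3) :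
    negCoord j h i = if i = j then -h i else h i := by
  simp only [negCoord, LinearIsometryEquiv.piLpCongrRight_apply, PiLp.toLp_apply]
  by_cases hij : i = j <;> simp [hij]

lemma moment1 (j : Fin 3) (ρ : ℝ) : ∫ h in ball (0 : E3) ρ, h j = 0 := by
  refine setIntegral_zero_of_odd (LinearIsometryEquiv.neg ℝ) _ ρ fun h => ?_
  simp

lemma moment2_offdiag {j k : Fin 3} (hjk : j ≠ k) (ρ : ℝ) :
    ∫ h in ball (0 : E3) ρ, h j * h k = 0 := by
  refine setIntegral_zero_of_odd (negCoord j) _ ρ fun h => ?_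
  rw [negCoord_apply, negCoord_apply, if_pos rfl, if_neg (Ne.symm hjk)]
  ring

lemma moment2_diag_eq (j : Fin 3) (ρ : ℝ) :
    ∫ h in ball (0 : E3) ρ, (h j) ^ 2 = ∫ h in ball (0 : E3) ρ, (h 0) ^ 2 := by
  have := setIntegral_comp_isometry
    (LinearIsometryEquiv.piLpCongrLeft 2 ℝ ℝ (Equiv.swap j (0 : Fin 3)))
    (fun h => (h 0) ^ 2) ρ
  rw [← this]
  congr 1
  ext h
  rw [LinearIsometryEquiv.piLpCongrLeft_apply]
  have : (Equiv.piCongrLeft' (fun _ : Fin 3 => ℝ) (Equiv.swap j 0) h) 0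
      = h ((Equiv.swap j 0).symm 0) := rfl
  rw [this, Equiv.symm_swap, Equiv.swap_apply_right]

lemma gamma_five_half : Real.Gamma (3 / 2 + 1) = 3 / 4 * Real.sqrt Real.pi := by
  rw [Real.Gamma_add_one (by norm_num)]
  have : (3 / 2 : ℝ) = 1 / 2 + 1 := by norm_num
  rw [this, Real.Gamma_add_one (by norm_num), Real.Gamma_one_half_eq]
  ring

lemma volume_ball_one : (volume (ball (0 : E3) 1)).toReal = 4 * Real.pi / 3 := by
  rw [EuclideanSpace.volume_ball]
  have hπ : 0 < Real.sqrt Real.pi := Real.sqrt_pos.mpr Real.pi_pos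
  rw [Fintype.card_fin]
  rw [ENNReal.toReal_mul, ENNReal.toReal_pow, ENNReal.toReal_ofReal (by norm_num),
    ENNReal.toReal_ofReal (by positivity)]
  have h3 : ((3 : ℕ) : ℝ) / 2 + 1 = 3 / 2 + 1 := by norm_num
  rw [h3, gamma_five_half, one_pow, pow_succ, Real.sq_sqrt Real.pi_pos.le]
  field_simp

lemma integral_norm_sq_ball (ρ : ℝ) (hρ : 0 < ρ) :
    ∫ h in ball (0 : E3) ρ, ‖h‖ ^ 2 = 4 * Real.pi * ρ ^ 5 / 5 := by
  classical
  set g : ℝ → ℝ := Set.indicator (Set.Iio ρ) (fun y => y ^ 2) with hg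
  have h1 : ∫ h in ball (0 : E3) ρ, ‖h‖ ^ 2 = ∫ h : E3, g ‖h‖ := by
    rw [← integral_indicator measurableSet_ball]
    congr 1
    ext h
    by_cases hh : h ∈ ball (0 : E3) ρ
    · rw [Set.indicator_of_mem hh, hg,
        Set.indicator_of_mem (by simpa [mem_ball_zero_iff] using hh)]
    · rw [Set.indicator_of_notMem hh, hg,
        Set.indicator_of_notMem (by simpa [mem_ball_zero_iff] using hh)]
  have hdim : Module.finrank ℝ E3 = 3 := by
    simp [finrank_euclideanSpace]
  have h2 := integral_fun_norm_addHaar (volume : Measure E3) g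
  rw [hdim] at h2
  have h3 : ∫ y in Set.Ioi (0 : ℝ), y ^ (3 - 1) • g y = ρ ^ 5 / 5 := by
    have : ∀ y : ℝ, y ^ (3 - 1) • g y = Set.indicator (Set.Iio ρ) (fun y => y ^ 4) y := by
      intro y
      by_cases hy : y ∈ Set.Iio ρ
      · simp only [hg, Set.indicator_of_mem hy, smul_eq_mul]
        ring
      · simp [hg, Set.indicator_of_notMem hy]
    simp_rw [this]
    rw [setIntegral_indicator measurableSet_Iio]
    have : Set.Ioi (0 : ℝ) ∩ Set.Iio ρ = Set.Ioo 0 ρ := Set.Ioi_inter_Iio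
    rw [this, ← integral_Ioc_eq_integral_Ioo, ← intervalIntegral.integral_of_le hρ.le,
      integral_pow]
    norm_num
  rw [h1, h2, h3, measureReal_def, volume_ball_one]
  simp only [smul_eq_mul, nsmul_eq_mul]
  push_cast
  ring

lemma continuous_coord (i : Fin 3) : Continuous (fun h : E3 => h i) :=
  (EuclideanSpace.proj (𝕜 := ℝ) i).continuous

lemma moment2_diag (j : Fin 3) (ρ : ℝ) (hρ : 0 < ρ) :
    ∫ h in ball (0 : E3) ρ, (h j) ^ 2 = 4 * Real.pi * ρ ^ 5 / 15 := by
  have hnorm : ∀ h : E3, ‖h‖ ^ 2 = ∑ i : Fin 3, (h i) ^ 2 := by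
    intro h
    rw [EuclideanSpace.norm_eq, Real.sq_sqrt (by positivity)]
    simp [sq_abs]
  have hint : ∀ i : Fin 3, IntegrableOn (fun h : E3 => (h i) ^ 2) (ball (0 : E3) ρ) :=
    fun i => integrableOn_ball_of_continuous ((continuous_coord i).pow 2) ρ
  have h1 : ∫ h in ball (0 : E3) ρ, ‖h‖ ^ 2
      = ∑ i : Fin 3, ∫ h in ball (0 : E3) ρ, (h i) ^ 2 := by
    simp_rw [hnorm]
    exact integral_finset_sum _ fun i _ => hint i
  have h2 : ∀ i : Fin 3, ∫ h in ball (0 : E3) ρ, (h i) ^ 2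
      = ∫ h in ball (0 : E3) ρ, (h j) ^ 2 := fun i =>
    (moment2_diag_eq i ρ).trans (moment2_diag_eq j ρ).symm
  rw [integral_norm_sq_ball ρ hρ] at h1
  simp_rw [h2] at h1
  rw [Finset.sum_const, Finset.card_univ, Fintype.card_fin, nsmul_eq_mul] at h1
  linarith

lemma key_row (γ : ℝ) (b : Fin 3 → ℝ) (ρ : ℝ) (hρ : 0 < ρ) :
    ∫ h in ball (0 : E3) ρ, (γ + ∑ j, b j * h j) ^ 2
      = γ ^ 2 * (volume (ball (0 : E3) ρ)).toReal
        + (4 * Real.pi * ρ ^ 5 / 15) * ∑ j, (b j) ^ 2 := by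
  have hexp : ∀ h : E3, (γ + ∑ j, b j * h j) ^ 2
      = γ ^ 2 + ((∑ j, (2 * γ * b j) * h j)
        + ∑ j, ∑ k, (b j * b k) * (h j * h k)) := by
    intro h
    have hS : (∑ j, b j * h j) ^ 2 = ∑ j, ∑ k, (b j * b k) * (h j * h k) := by
      rw [sq, Finset.sum_mul_sum]
      exact Finset.sum_congr rfl fun j _ => Finset.sum_congr rfl fun k _ => by ring
    have hL : 2 * γ * (∑ j, b j * h j) = ∑ j, (2 * γ * b j) * h j := by
      rw [Finset.mul_sum]
      exact Finset.sum_congr rfl fun j _ => by ring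
    rw [add_sq, hS, ← hL]
    ring
  have hcont1 : ∀ j : Fin 3, Continuous (fun h : E3 => (2 * γ * b j) * h j) :=
    fun j => (continuous_const.mul (continuous_coord j))
  have hcont2 : ∀ j k : Fin 3, Continuous (fun h : E3 => (b j * b k) * (h j * h k)) :=
    fun j k => continuous_const.mul ((continuous_coord j).mul (continuous_coord k))
  have hi1 : IntegrableOn (fun h : E3 => ∑ j, (2 * γ * b j) * h j) (ball (0 : E3) ρ) :=
    integrableOn_ball_of_continuous (by exact continuous_finset_sum _ fun j _ => hcont1 j) ρ
  have hi2 : IntegrableOn (fun h : E3 => ∑ j, ∑ k, (b j * b k) * (h j * h k))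
      (ball (0 : E3) ρ) :=
    integrableOn_ball_of_continuous
      (continuous_finset_sum _ fun j _ => continuous_finset_sum _ fun k _ => hcont2 j k) ρ
  have hi12 : IntegrableOn (fun h : E3 => (∑ j, (2 * γ * b j) * h j)
      + ∑ j, ∑ k, (b j * b k) * (h j * h k)) (ball (0 : E3) ρ) := hi1.add hi2
  simp_rw [hexp]
  rw [integral_add ((integrableOn_const_iff (C := γ ^ 2)).mpr (Or.inr measure_ball_lt_top)) hi12,
    integral_add hi1 hi2, setIntegral_const, measureReal_def]
  have e1 : ∫ h in ball (0 : E3) ρ, ∑ j, (2 * γ * b j) * h j = 0 := by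
    rw [integral_finset_sum _ fun j _ =>
      integrableOn_ball_of_continuous (hcont1 j) ρ]
    simp_rw [integral_const_mul, moment1, mul_zero, Finset.sum_const_zero]
  have e2 : ∫ h in ball (0 : E3) ρ, ∑ j, ∑ k, (b j * b k) * (h j * h k)
      = (4 * Real.pi * ρ ^ 5 / 15) * ∑ j, (b j) ^ 2 := by
    rw [integral_finset_sum _ fun j _ => integrableOn_ball_of_continuous
      (continuous_finset_sum _ fun k _ => hcont2 j k) ρ]
    have : ∀ j : Fin 3, ∫ h in ball (0 : E3) ρ, ∑ k, (b j * b k) * (h j * h k)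
        = (4 * Real.pi * ρ ^ 5 / 15) * (b j) ^ 2 := by
      intro j
      rw [integral_finset_sum _ fun k _ =>
        integrableOn_ball_of_continuous (hcont2 j k) ρ]
      rw [Finset.sum_eq_single j]
      · simp_rw [integral_const_mul]
        have : ∫ h in ball (0 : E3) ρ, h j * h j = 4 * Real.pi * ρ ^ 5 / 15 := by
          simp_rw [← sq]; exact moment2_diag j ρ hρ
        rw [this]; ring
      · intro k _ hk
        simp_rw [integral_const_mul, moment2_offdiag (Ne.symm hk) ρ, mul_zero]
      · intro hj; exact absurd (Finset.mem_univ j) hj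
    simp_rw [this, ← Finset.mul_sum]
  rw [e1, e2, smul_eq_mul]
  ring

lemma frob_sq {n : ℕ} (S : Matrix (Fin n) (Fin n) ℝ) :
    frob S ^ 2 = ∑ i, ∑ j, (S i j) ^ 2 := by
  have htr : (Sᵀ * S).trace = ∑ i, ∑ j, (S i j) ^ 2 := by
    rw [Matrix.trace]
    simp only [Matrix.diag_apply, Matrix.mul_apply, Matrix.transpose_apply, sq]
    exact Finset.sum_comm
  rw [frob, htr, Real.sq_sqrt]
  exact Finset.sum_nonneg fun i _ => Finset.sum_nonneg fun j _ => sq_nonneg _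

lemma cross_zero (S T : Matrix (Fin 3) (Fin 3) ℝ)
    (hS : ∀ i j, S j i = S i j) (hT : ∀ i j, T j i = - T i j) :
    ∑ i, ∑ j, S i j * T i j = 0 := by
  have h1 : ∑ i, ∑ j, S i j * T i j = ∑ j, ∑ i, S i j * T i j := Finset.sum_comm
  have h2 : ∀ j i : Fin 3, S i j * T i j = - (S j i * T j i) := by
    intro j i
    rw [hS i j, hT i j]
    ring
  have h3 : ∑ j, ∑ i, S i j * T i j = - ∑ i, ∑ j, S i j * T i j := by
    calc ∑ j, ∑ i, S i j * T i j = ∑ j, ∑ i, - (S j i * T j i) :=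
          Finset.sum_congr rfl fun j _ => Finset.sum_congr rfl fun i _ => h2 j i
      _ = - ∑ j, ∑ i, S j i * T j i := by simp [Finset.sum_neg_distrib]
  rw [h3] at h1
  linarith

theorem infinitesimal_rigid_best_approx (A W : Matrix (Fin 3) (Fin 3) ℝ)
    (hW : Wᵀ = -W) (p t : EuclideanSpace ℝ (Fin 3)) (ρ : ℝ) (hρ : 0 < ρ) :
    (∫ h in Metric.ball (0 : EuclideanSpace ℝ (Fin 3)) ρ,
        ‖p + mv A h - (mv W h + t)‖ ^ 2)
      ≥ (4 * Real.pi * ρ ^ 5 / 15) * frob ((1 / 2 : ℝ) • (A + Aᵀ)) ^ 2 ∧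
    ((∫ h in Metric.ball (0 : EuclideanSpace ℝ (Fin 3)) ρ,
        ‖p + mv A h - (mv W h + t)‖ ^ 2)
      = (4 * Real.pi * ρ ^ 5 / 15) * frob ((1 / 2 : ℝ) • (A + Aᵀ)) ^ 2 ↔
        t = p ∧ W = (1 / 2 : ℝ) • (A - Aᵀ)) := by
  classical
  set κ : ℝ := 4 * Real.pi * ρ ^ 5 / 15 with hκdef
  set V : ℝ := (volume (ball (0 : E3) ρ)).toReal with hVdef
  set c : Fin 3 → ℝ := fun i => p i - t i with hcdef
  set B : Matrix (Fin 3) (Fin 3) ℝ := A - W with hBdef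
  set S : Matrix (Fin 3) (Fin 3) ℝ := (1 / 2 : ℝ) • (A + Aᵀ) with hSdef
  set T : Matrix (Fin 3) (Fin 3) ℝ := (1 / 2 : ℝ) • (A - Aᵀ) - W with hTdef
  have hWskew : ∀ i j, W j i = - W i j := by
    intro i j
    have := congrFun (congrFun hW i) j
    simpa [Matrix.transpose_apply, Matrix.neg_apply] using this
  -- pointwise expression of the integrand
  have happ : ∀ h : E3, ‖p + mv A h - (mv W h + t)‖ ^ 2
      = ∑ i, (c i + ∑ j, B i j * h j) ^ 2 := by
    intro h
    have hco : ∀ i, (p + mv A h - (mv W h + t)) i = c i + ∑ j, B i j * h j := by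
      intro i
      have h1 : (p + mv A h - (mv W h + t)) i
          = p i + (∑ j, A i j * h j) - ((∑ j, W i j * h j) + t i) := rfl
      rw [h1, hcdef, hBdef]
      simp only [Matrix.sub_apply, sub_mul]
      rw [Finset.sum_sub_distrib]
      ring
    rw [EuclideanSpace.norm_eq, Real.sq_sqrt (by positivity)]
    exact Finset.sum_congr rfl fun i _ => by rw [hco i, Real.norm_eq_abs, sq_abs]
  -- compute the integral
  have hI : (∫ h in ball (0 : E3) ρ, ‖p + mv A h - (mv W h + t)‖ ^ 2)
      = V * (∑ i, (c i) ^ 2) + κ * ∑ i, ∑ j, (B i j) ^ 2 := by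
    simp_rw [happ]
    rw [integral_finset_sum _ fun i _ => integrableOn_ball_of_continuous
      (f := fun h : E3 => (c i + ∑ j, B i j * h j) ^ 2) ((continuous_const.add (continuous_finset_sum _ fun j _ =>
        continuous_const.mul (continuous_coord j))).pow 2) ρ]
    have : ∀ i : Fin 3, ∫ h in ball (0 : E3) ρ, (c i + ∑ j, B i j * h j) ^ 2
        = (c i) ^ 2 * V + κ * ∑ j, (B i j) ^ 2 := fun i => key_row (c i) (B i) ρ hρ
    simp_rw [this]
    rw [Finset.sum_add_distrib, ← Finset.sum_mul, ← Finset.mul_sum]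
    ring
  -- decompose B
  have hBST : ∀ i j, B i j = S i j + T i j := by
    intro i j
    simp only [hBdef, hSdef, hTdef, Matrix.sub_apply, Matrix.add_apply, Matrix.smul_apply,
      Matrix.transpose_apply, smul_eq_mul]
    ring
  have hSsymm : ∀ i j, S j i = S i j := by
    intro i j
    simp only [hSdef, Matrix.add_apply, Matrix.smul_apply, Matrix.transpose_apply, smul_eq_mul]
    ring
  have hTskew : ∀ i j, T j i = - T i j := by
    intro i j
    simp only [hTdef, Matrix.sub_apply, Matrix.smul_apply, Matrix.transpose_apply,
      smul_eq_mul, hWskew i j]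
    ring
  have hBsum : ∑ i, ∑ j, (B i j) ^ 2
      = (∑ i, ∑ j, (S i j) ^ 2) + ∑ i, ∑ j, (T i j) ^ 2 := by
    have hcross := cross_zero S T hSsymm hTskew
    have : ∀ i j : Fin 3, (B i j) ^ 2 = (S i j) ^ 2 + (T i j) ^ 2 + 2 * (S i j * T i j) := by
      intro i j; rw [hBST i j]; ring
    simp_rw [this]
    simp only [Finset.sum_add_distrib, ← Finset.mul_sum]
    rw [hcross]
    ring
  have hfrob : frob ((1 / 2 : ℝ) • (A + Aᵀ)) ^ 2 = ∑ i, ∑ j, (S i j) ^ 2 := by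
    rw [← hSdef]; exact frob_sq S
  have hI2 : (∫ h in ball (0 : E3) ρ, ‖p + mv A h - (mv W h + t)‖ ^ 2)
      = κ * frob ((1 / 2 : ℝ) • (A + Aᵀ)) ^ 2
        + (V * (∑ i, (c i) ^ 2) + κ * ∑ i, ∑ j, (T i j) ^ 2) := by
    rw [hI, hBsum, hfrob]
    ring
  have hVpos : 0 < V := by
    rw [hVdef]
    exact ENNReal.toReal_pos (measure_ball_pos volume 0 hρ).ne' measure_ball_lt_top.ne
  have hκpos : 0 < κ := by
    rw [hκdef]
    have := Real.pi_pos
    positivity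
  have hcsq : 0 ≤ ∑ i, (c i) ^ 2 := Finset.sum_nonneg fun i _ => sq_nonneg _
  have hTsq : 0 ≤ ∑ i, ∑ j, (T i j) ^ 2 :=
    Finset.sum_nonneg fun i _ => Finset.sum_nonneg fun j _ => sq_nonneg _
  constructor
  · rw [hI2]
    nlinarith [mul_nonneg hVpos.le hcsq, mul_nonneg hκpos.le hTsq]
  · constructor
    · intro heq
      rw [hI2] at heq
      have hzero : V * (∑ i, (c i) ^ 2) + κ * ∑ i, ∑ j, (T i j) ^ 2 = 0 := by linarith
      have hc0 : ∑ i, (c i) ^ 2 = 0 := by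
        nlinarith [mul_nonneg hVpos.le hcsq, mul_nonneg hκpos.le hTsq]
      have hT0 : ∑ i, ∑ j, (T i j) ^ 2 = 0 := by
        nlinarith [mul_nonneg hVpos.le hcsq, mul_nonneg hκpos.le hTsq]
      constructor
      · ext i
        have := (Finset.sum_eq_zero_iff_of_nonneg (fun i _ => sq_nonneg (c i))).mp hc0 i
          (Finset.mem_univ i)
        have hci : c i = 0 := by
          have := sq_eq_zero_iff.mp this
          exact this
        have : p i - t i = 0 := hci
        linarith
      · ext i j
        have hrow := (Finset.sum_eq_zero_iff_of_nonneg
          (fun i _ => Finset.sum_nonneg fun j _ => sq_nonneg (T i j))).mp hT0 i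
          (Finset.mem_univ i)
        have hent := (Finset.sum_eq_zero_iff_of_nonneg
          (fun j _ => sq_nonneg (T i j))).mp hrow j (Finset.mem_univ j)
        have hTij : T i j = 0 := sq_eq_zero_iff.mp hent
        have : ((1 / 2 : ℝ) • (A - Aᵀ)) i j - W i j = 0 := hTij
        linarith
    · rintro ⟨rfl, rfl⟩
      rw [hI2]
      have hc0 : (∑ i, (c i) ^ 2) = 0 := by
        simp [hcdef]
      have hT0 : (∑ i, ∑ j, (T i j) ^ 2) = 0 := by
        simp [hTdef]
      rw [hc0, hT0]
      ring
end
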